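/- Suppose m > 0, 0 < ΔP < m/2, α_R + α_H ≤ 1, and α_H ≤ R⁺ ≤ α_R + α_H. Then z* = R⁺ is an attractor of M(z) = α_R·𝟙{h(z) ≥ 0} + α_H·𝟙{z ≥ 1/2} − z: for small ε > 0, M(z) = α_R + α_H − z > 0 on (R⁺ − ε, R⁺) and M(z) = α_H − z < 0 on (R⁺, R⁺ + ε), provided α_H < R⁺ < α_R + α_H (strict inequalities). -/

import Mathlib

/-- when α_H < R⁺ < α_R + α_H, z* = R⁺ is an attractor of M. -/
theorem stmt13 (m ΔP αR αH : ℝ) (hm : 0 < m) (hΔ : 0 < ΔP) (hΔm : ΔP < m / 2)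
    (hαR : αR ∈ Set.Icc (0 : ℝ) 1) (hαH : αH ∈ Set.Icc (0 : ℝ) 1)
    (hsum : αR + αH ≤ 1)
    (h M : ℝ → ℝ) (hdef : ∀ z, h z = 2 * m * z * (1 - z) - ΔP)
    (hM : ∀ z, M z = αR * (if 0 ≤ h z then 1 else 0) +
        αH * (if (1 : ℝ) / 2 ≤ z then 1 else 0) - z)
    (Rplus : ℝ) (hRp : Rplus = (1 + Real.sqrt (1 - 2 * ΔP / m)) / 2)
    (hlow : αH < Rplus) (hhigh : Rplus < αR + αH) :
    ∃ ε > (0 : ℝ),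
      (∀ z : ℝ, Rplus - ε < z → z < Rplus → M z = αR + αH - z ∧ 0 < M z) ∧
      (∀ z : ℝ, Rplus < z → z < Rplus + ε → M z = αH - z ∧ M z < 0) := by
  set s := Real.sqrt (1 - 2 * ΔP / m) with hs
  have hnn : (0:ℝ) ≤ 1 - 2 * ΔP / m := by
    have : 2 * ΔP / m ≤ 1 := by
      rw [div_le_one hm]; linarith
    linarith
  have hspos : 0 < s := Real.sqrt_pos.mpr (by
    have : 2 * ΔP / m < 1 := by rw [div_lt_one hm]; linarith
    linarith)
  have hssq : s ^ 2 = 1 - 2 * ΔP / m := Real.sq_sqrt hnn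
  have hhalf : (1:ℝ)/2 < Rplus := by rw [hRp]; linarith
  -- factorization of h
  set Rm : ℝ := (1 - s) / 2 with hRm
  have hRmlt : Rm < 1/2 := by rw [hRm]; linarith
  have hfac : ∀ z, h z = -2 * m * (z - Rm) * (z - Rplus) := by
    intro z
    rw [hdef, hRm, hRp]
    have hΔeq : ΔP = m * (1 - s^2) / 2 := by
      rw [hssq]; field_simp; ring
    rw [hΔeq]
    ring_nf
  refine ⟨min (Rplus - 1/2) (min (αR + αH - Rplus) (Rplus - αH)), by
    simp only [lt_min_iff]; exact ⟨by linarith, by linarith, by linarith⟩, ?_, ?_⟩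
  · intro z hz1 hz2
    have hε1 : Rplus - min (Rplus - 1/2) (min (αR + αH - Rplus) (Rplus - αH)) ≥ 1/2 := by
      have := min_le_left (Rplus - 1/2) (min (αR + αH - Rplus) (Rplus - αH)); linarith
    have hz12 : (1:ℝ)/2 < z := by linarith
    have hhge : 0 ≤ h z := by
      rw [hfac]
      have h1 : 0 < z - Rm := by linarith
      have h2 : z - Rplus < 0 := by linarith
      nlinarith [mul_pos (mul_pos hm h1) (show 0 < Rplus - z by linarith)]
    have hMz : M z = αR + αH - z := by
      rw [hM z, if_pos hhge, if_pos (le_of_lt hz12)]; ring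
    refine ⟨hMz, ?_⟩
    rw [hMz]
    have := min_le_left (αR + αH - Rplus) (Rplus - αH)
    linarith
  · intro z hz1 hz2
    have hz12 : (1:ℝ)/2 ≤ z := by linarith
    have hhlt : ¬ (0 ≤ h z) := by
      rw [hfac]
      have h1 : 0 < z - Rm := by linarith
      have h2 : 0 < z - Rplus := by linarith
      nlinarith [mul_pos (mul_pos hm h1) h2]
    have hMz : M z = αH - z := by
      rw [hM z, if_neg hhlt, if_pos hz12]; ring
    refine ⟨hMz, ?_⟩
    rw [hMz]; linarith
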